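/- Let λ, μ be partitions of length n, set m = max(λ_1, μ_1), λ̂ = (m−λ_n, m−λ_{n−1}, …, m−λ_1) and μ̂ = (m−μ_n, …, m−μ_1) (these are partitions of length n). Then u_{λ,μ}(q) = K̃^{D_n}_{λ̂,μ̂}(q). -/
import Mathlib


open Finset Polynomial

noncomputable section

/-- The standard basis vector `ε_i` of `ℤ^n`. -/
def eps (n : ℕ) (i : Fin n) : Fin n → ℤ := Pi.single i 1

/-- Pairs `(i,j)` with `i < j`. -/
def pairsLt (n : ℕ) : Finset (Fin n × Fin n) :=
  Finset.univ.filter fun p => p.1 < p.2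

/-- Pairs `(i,j)` with `i ≤ j`. -/
def pairsLe (n : ℕ) : Finset (Fin n × Fin n) :=
  Finset.univ.filter fun p => p.1 ≤ p.2

/-- Positive roots of type `A_{n-1}`: the `ε_i - ε_j`, `i < j`. -/
def RA (n : ℕ) : Finset (Fin n → ℤ) :=
  (pairsLt n).image fun p => eps n p.1 - eps n p.2

/-- Positive roots of type `D_n`: the `ε_i - ε_j` and `ε_i + ε_j`, `i < j`. -/
def RD (n : ℕ) : Finset (Fin n → ℤ) :=
  RA n ∪ ((pairsLt n).image fun p => eps n p.1 + eps n p.2)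

/-- Positive roots of type `C_n`: those of `D_n` together with the `2ε_i`. -/
def RC (n : ℕ) : Finset (Fin n → ℤ) :=
  RD n ∪ (Finset.univ.image fun i : Fin n => (2 : ℤ) • eps n i)

/-- Positive roots of type `B_n`: those of `D_n` together with the `ε_i`. -/
def RB (n : ℕ) : Finset (Fin n → ℤ) :=
  RD n ∪ (Finset.univ.image fun i : Fin n => eps n i)

/-- The `q`-partition function attached to a finite set `R` of positive roots:
`P_q(β) = Σ_m q^{Σ_α m(α)}`, the sum over the (finitely many) functions
`m : R → ℕ` with `Σ_α m(α)·α = β`. -/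
def Pq (n : ℕ) (R : Finset (Fin n → ℤ)) (β : Fin n → ℤ) : Polynomial ℤ :=
  ∑ᶠ m ∈ {m : (Fin n → ℤ) → ℕ |
      (∀ α, α ∉ R → m α = 0) ∧ ∑ α ∈ R, m α • α = β},
    (X : Polynomial ℤ) ^ ∑ α ∈ R, m α

/-- `ρ_n = (n, n-1, ..., 1)`. -/
def rho (n : ℕ) : Fin n → ℤ := fun i => (n : ℤ) - ((i : ℕ) : ℤ)

/-- `ρ_{D_n} = (n-1, n-2, ..., 0)`. -/
def rhoD (n : ℕ) : Fin n → ℤ := fun i => (n : ℤ) - ((i : ℕ) : ℤ) - 1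

/-- The restricted alternating sum `K̃_{λ,μ}(q) = Σ_{σ ∈ S_n} sgn(σ) P_q(σ(λ+ρ_n) - (μ+ρ_n))`
attached to a set `R` of positive roots.  For `R = RA n` this is the type `A_{n-1}`
Kostka-Foulkes polynomial `K^{A_{n-1}}_{λ,μ}(q)`. -/
def KT (n : ℕ) (R : Finset (Fin n → ℤ)) (lam mu : Fin n → ℤ) : Polynomial ℤ :=
  ∑ σ : Equiv.Perm (Fin n),
    (Equiv.Perm.sign σ : ℤ) •
      Pq n R (fun i => (lam + rho n) (σ i) - (mu + rho n) i)

/-- The type `C_n` Kostka-Foulkes polynomial: the alternating sum over the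
hyperoctahedral group `W_{C_n}` (signed permutations, a signed permutation being
encoded as a pair `(σ, e)` acting by `v ↦ (i ↦ e i * v (σ i))`, whose determinant
is `sgn(σ) * ∏ i, e i`), with `ρ_{C_n} = ρ_n`. -/
def KC (n : ℕ) (lam mu : Fin n → ℤ) : Polynomial ℤ :=
  ∑ σ : Equiv.Perm (Fin n), ∑ e : Fin n → ℤˣ,
    ((Equiv.Perm.sign σ : ℤ) * ∏ i, (e i : ℤ)) •
      Pq n (RC n) (fun i => (e i : ℤ) * (lam + rho n) (σ i) - (mu + rho n) i)

/-- The type `D_n` Kostka-Foulkes polynomial: the alternating sum over `W_{D_n}`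
(signed permutations with an even number of sign changes), with `ρ_{D_n} = (n-1, ..., 0)`. -/
def KD (n : ℕ) (lam mu : Fin n → ℤ) : Polynomial ℤ :=
  ∑ σ : Equiv.Perm (Fin n),
    ∑ e ∈ Finset.univ.filter (fun e : Fin n → ℤˣ => ∏ i, e i = 1),
      ((Equiv.Perm.sign σ : ℤ) * ∏ i, (e i : ℤ)) •
        Pq n (RD n) (fun i => (e i : ℤ) * (lam + rhoD n) (σ i) - (mu + rhoD n) i)

/-- `c(δ)`: the number of families `(e_{rs})_{1 ≤ r ≤ s ≤ n}` of nonnegative integers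
with `Σ_{r ≤ s} e_{rs} (ε_r + ε_s) = δ`. -/
def cC (n : ℕ) (δ : Fin n → ℤ) : ℕ :=
  Set.ncard {e : Fin n × Fin n → ℕ |
    (∀ p, p ∉ pairsLe n → e p = 0) ∧
    ∑ p ∈ pairsLe n, e p • (eps n p.1 + eps n p.2) = δ}

/-- `d(δ)`: the number of families `(e_{rs})_{1 ≤ r < s ≤ n}` of nonnegative integers
with `Σ_{r < s} e_{rs} (ε_r + ε_s) = δ`. -/
def dD (n : ℕ) (δ : Fin n → ℤ) : ℕ :=
  Set.ncard {e : Fin n × Fin n → ℕ |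
    (∀ p, p ∉ pairsLt n → e p = 0) ∧
    ∑ p ∈ pairsLt n, e p • (eps n p.1 + eps n p.2) = δ}

/-- `f_q(β)`: the coefficient of `x^β` in
`∏_{i<j} (1 - q x_i/x_j)⁻¹ ∏_{r<s} (1 - q/(x_r x_s))⁻¹`, i.e. the sum of
`q^{Σ a + Σ b}` over families `a = (a_{ij})_{i<j}`, `b = (b_{rs})_{r<s}` of
nonnegative integers with `Σ a_{ij}(ε_i - ε_j) - Σ b_{rs}(ε_r + ε_s) = β`. -/
def fq (n : ℕ) (β : Fin n → ℤ) : Polynomial ℤ :=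
  ∑ᶠ ab ∈ {ab : ((Fin n × Fin n) → ℕ) × ((Fin n × Fin n) → ℕ) |
      (∀ p, p ∉ pairsLt n → ab.1 p = 0) ∧ (∀ p, p ∉ pairsLt n → ab.2 p = 0) ∧
      ((∑ p ∈ pairsLt n, ab.1 p • (eps n p.1 - eps n p.2)) -
        ∑ p ∈ pairsLt n, ab.2 p • (eps n p.1 + eps n p.2)) = β},
    (X : Polynomial ℤ) ^ ((∑ p ∈ pairsLt n, ab.1 p) + ∑ p ∈ pairsLt n, ab.2 p)

/-- `F_q(β)`: the coefficient of `x^β` in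
`∏_{i<j} (1 - q x_i/x_j)⁻¹ ∏_{r≤s} (1 - q/(x_r x_s))⁻¹`, i.e. the sum of
`q^{Σ a + Σ b}` over families `a = (a_{ij})_{i<j}`, `b = (b_{rs})_{r≤s}` of
nonnegative integers with `Σ a_{ij}(ε_i - ε_j) - Σ b_{rs}(ε_r + ε_s) = β`. -/
def Fq (n : ℕ) (β : Fin n → ℤ) : Polynomial ℤ :=
  ∑ᶠ ab ∈ {ab : ((Fin n × Fin n) → ℕ) × ((Fin n × Fin n) → ℕ) |
      (∀ p, p ∉ pairsLt n → ab.1 p = 0) ∧ (∀ p, p ∉ pairsLe n → ab.2 p = 0) ∧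
      ((∑ p ∈ pairsLt n, ab.1 p • (eps n p.1 - eps n p.2)) -
        ∑ p ∈ pairsLe n, ab.2 p • (eps n p.1 + eps n p.2)) = β},
    (X : Polynomial ℤ) ^ ((∑ p ∈ pairsLt n, ab.1 p) + ∑ p ∈ pairsLe n, ab.2 p)

/-- The `q`-multiplicity `u_{λ,μ}(q) = Σ_{σ ∈ S_n} sgn(σ) f_q(σ(λ+ρ_n) - (μ+ρ_n))`. -/
def uP (n : ℕ) (lam mu : Fin n → ℤ) : Polynomial ℤ :=
  ∑ σ : Equiv.Perm (Fin n),
    (Equiv.Perm.sign σ : ℤ) •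
      fq n (fun i => (lam + rho n) (σ i) - (mu + rho n) i)

/-- The `q`-multiplicity `U_{λ,μ}(q) = Σ_{σ ∈ S_n} sgn(σ) F_q(σ(λ+ρ_n) - (μ+ρ_n))`. -/
def UP (n : ℕ) (lam mu : Fin n → ℤ) : Polynomial ℤ :=
  ∑ σ : Equiv.Perm (Fin n),
    (Equiv.Perm.sign σ : ℤ) •
      Fq n (fun i => (lam + rho n) (σ i) - (mu + rho n) i)

/-- `1_ℕ(β) = 1` if all coordinates of `β` are nonnegative, and `0` otherwise. -/
def indNat (n : ℕ) (v : Fin n → ℤ) : ℤ := if ∀ i, 0 ≤ v i then 1 else 0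

/-- The branching coefficient `b_{λ,ν} = Σ_{σ ∈ S_n} sgn(σ) 1_ℕ(σ(λ+ρ_n) - (ν+ρ_n))`. -/
def bcoef (n : ℕ) (lam nu : Fin n → ℤ) : ℤ :=
  ∑ σ : Equiv.Perm (Fin n),
    (Equiv.Perm.sign σ : ℤ) *
      indNat n (fun i => (lam + rho n) (σ i) - (nu + rho n) i)

/-- The coefficient of `q^j` (for `j : ℤ`) in a polynomial: `0` for negative `j`. -/
def zcoeff (p : Polynomial ℤ) (j : ℤ) : ℤ := if 0 ≤ j then p.coeff j.toNat else 0

/-- The conjugate partition, padded with zeros to length `n`: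
`λ'_i = #{j : λ_j ≥ i}` (for the `i`-th coordinate, `i = 1, ..., n`). -/
def conj (n : ℕ) (lam : Fin n → ℤ) : Fin n → ℤ :=
  fun i => ((Finset.univ.filter fun j : Fin n => ((i : ℕ) : ℤ) + 1 ≤ lam j).card : ℤ)

end


section AuxLemmas

variable {n : ℕ}

lemma eps_apply (i j : Fin n) : eps n i j = if j = i then (1:ℤ) else 0 := by
  simp [eps, Pi.single_apply]

lemma eps_rev (k i : Fin n) : eps n k i.rev = eps n k.rev i := by
  rcases eq_or_ne i k.rev with rfl | h
  · rw [eps_apply, eps_apply, if_pos (Fin.rev_rev k), if_pos rfl]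
  · rw [eps_apply, eps_apply, if_neg, if_neg h]
    intro hh
    exact h (by rw [← hh, Fin.rev_rev])

lemma mem_pairsLt {p : Fin n × Fin n} : p ∈ pairsLt n ↔ p.1 < p.2 := by
  simp [pairsLt]

lemma epsSub_inj {i j k l : Fin n} (hij : i < j) (hkl : k < l)
    (h : eps n i - eps n j = eps n k - eps n l) : i = k ∧ j = l := by
  have hij' : (i:ℕ) < (j:ℕ) := hij
  have hkl' : (k:ℕ) < (l:ℕ) := hkl
  have h1 := congrFun h i
  have h2 := congrFun h j
  simp only [Pi.sub_apply, eps_apply, eq_self_iff_true, if_true] at h1 h2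
  refine ⟨Fin.val_injective ?_, Fin.val_injective ?_⟩
  · split_ifs at h1 <;> subst_vars <;> omega
  · split_ifs at h2 <;> subst_vars <;> omega

lemma epsAdd_inj {i j k l : Fin n} (hij : i < j) (hkl : k < l)
    (h : eps n i + eps n j = eps n k + eps n l) : i = k ∧ j = l := by
  have hij' : (i:ℕ) < (j:ℕ) := hij
  have hkl' : (k:ℕ) < (l:ℕ) := hkl
  have h1 := congrFun h i
  have h2 := congrFun h j
  have h3 := congrFun h k
  have h4 := congrFun h l
  simp only [Pi.add_apply, eps_apply, eq_self_iff_true, if_true] at h1 h2 h3 h4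
  refine ⟨Fin.val_injective ?_, Fin.val_injective ?_⟩
  · split_ifs at h1 h3 <;> subst_vars <;> omega
  · split_ifs at h2 h4 <;> subst_vars <;> omega

lemma epsSub_ne_epsAdd {i j k l : Fin n} (hij : i < j) (hkl : k < l) :
    eps n i - eps n j ≠ eps n k + eps n l := by
  intro h
  have hij' : (i:ℕ) < (j:ℕ) := hij
  have hkl' : (k:ℕ) < (l:ℕ) := hkl
  have h2 := congrFun h j
  simp only [Pi.sub_apply, Pi.add_apply, eps_apply, eq_self_iff_true, if_true] at h2
  split_ifs at h2 <;> subst_vars <;> omega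

lemma sum_RD {M : Type*} [AddCommMonoid M] (f : (Fin n → ℤ) → M) :
    ∑ α ∈ RD n, f α =
      (∑ p ∈ pairsLt n, f (eps n p.1 - eps n p.2)) +
        ∑ p ∈ pairsLt n, f (eps n p.1 + eps n p.2) := by
  have hdisj : Disjoint (RA n) ((pairsLt n).image fun p => eps n p.1 + eps n p.2) := by
    rw [Finset.disjoint_left]
    rintro α hα hα'
    simp only [RA, Finset.mem_image] at hα hα'
    obtain ⟨p, hp, rfl⟩ := hα
    obtain ⟨q, hq, hqe⟩ := hα'
    exact epsSub_ne_epsAdd (mem_pairsLt.mp hp) (mem_pairsLt.mp hq) hqe.symm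
  rw [RD, Finset.sum_union hdisj, RA, Finset.sum_image, Finset.sum_image]
  · intro p hp q hq hpq
    obtain ⟨h1, h2⟩ := epsAdd_inj (mem_pairsLt.mp hp) (mem_pairsLt.mp hq) hpq
    exact Prod.ext h1 h2
  · intro p hp q hq hpq
    obtain ⟨h1, h2⟩ := epsSub_inj (mem_pairsLt.mp hp) (mem_pairsLt.mp hq) hpq
    exact Prod.ext h1 h2

/-- The "plus" condition set. -/
def Splus (n : ℕ) (β : Fin n → ℤ) :
    Set (((Fin n × Fin n) → ℕ) × ((Fin n × Fin n) → ℕ)) :=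
  {ab | (∀ p, p ∉ pairsLt n → ab.1 p = 0) ∧ (∀ p, p ∉ pairsLt n → ab.2 p = 0) ∧
    ((∑ p ∈ pairsLt n, ab.1 p • (eps n p.1 - eps n p.2)) +
      ∑ p ∈ pairsLt n, ab.2 p • (eps n p.1 + eps n p.2)) = β}

/-- Encode a pair of coefficient families as a function on roots. -/
def mOf (n : ℕ) (ab : ((Fin n × Fin n) → ℕ) × ((Fin n × Fin n) → ℕ)) :
    (Fin n → ℤ) → ℕ := fun α =>
  (∑ p ∈ pairsLt n, if α = eps n p.1 - eps n p.2 then ab.1 p else 0) +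
    ∑ p ∈ pairsLt n, if α = eps n p.1 + eps n p.2 then ab.2 p else 0

lemma mOf_sub {ab} {p : Fin n × Fin n} (hp : p ∈ pairsLt n) :
    mOf n ab (eps n p.1 - eps n p.2) = ab.1 p := by
  have hz : (∑ q ∈ pairsLt n,
      if eps n p.1 - eps n p.2 = eps n q.1 + eps n q.2 then ab.2 q else 0) = 0 :=
    Finset.sum_eq_zero fun q hq =>
      if_neg (epsSub_ne_epsAdd (mem_pairsLt.mp hp) (mem_pairsLt.mp hq))
  have hs : (∑ q ∈ pairsLt n,
      if eps n p.1 - eps n p.2 = eps n q.1 - eps n q.2 then ab.1 q else 0) = ab.1 p := by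
    rw [Finset.sum_eq_single_of_mem p hp, if_pos rfl]
    intro q hq hqp
    refine if_neg fun hh => hqp ?_
    obtain ⟨h1, h2⟩ := epsSub_inj (mem_pairsLt.mp hp) (mem_pairsLt.mp hq) hh
    exact Prod.ext h1.symm h2.symm
  simp only [mOf]
  rw [hz, hs, add_zero]

lemma mOf_add {ab} {p : Fin n × Fin n} (hp : p ∈ pairsLt n) :
    mOf n ab (eps n p.1 + eps n p.2) = ab.2 p := by
  have hz : (∑ q ∈ pairsLt n,
      if eps n p.1 + eps n p.2 = eps n q.1 - eps n q.2 then ab.1 q else 0) = 0 :=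
    Finset.sum_eq_zero fun q hq =>
      if_neg fun hh => epsSub_ne_epsAdd (mem_pairsLt.mp hq) (mem_pairsLt.mp hp) hh.symm
  have hs : (∑ q ∈ pairsLt n,
      if eps n p.1 + eps n p.2 = eps n q.1 + eps n q.2 then ab.2 q else 0) = ab.2 p := by
    rw [Finset.sum_eq_single_of_mem p hp, if_pos rfl]
    intro q hq hqp
    refine if_neg fun hh => hqp ?_
    obtain ⟨h1, h2⟩ := epsAdd_inj (mem_pairsLt.mp hp) (mem_pairsLt.mp hq) hh
    exact Prod.ext h1.symm h2.symm
  simp only [mOf]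
  rw [hz, hs, zero_add]

lemma mOf_not_mem {ab} {α : Fin n → ℤ} (hα : α ∉ RD n) : mOf n ab α = 0 := by
  simp only [mOf]
  rw [Finset.sum_eq_zero, Finset.sum_eq_zero, add_zero]
  · intro q hq
    rw [if_neg]
    rintro rfl
    exact hα (Finset.mem_union_right _ (Finset.mem_image_of_mem _ hq))
  · intro q hq
    rw [if_neg]
    rintro rfl
    exact hα (Finset.mem_union_left _ (Finset.mem_image_of_mem _ hq))

lemma mOf_exp (ab) :
    ∑ α ∈ RD n, mOf n ab α =
      (∑ p ∈ pairsLt n, ab.1 p) + ∑ p ∈ pairsLt n, ab.2 p := by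
  rw [sum_RD (mOf n ab)]
  congr 1
  · exact Finset.sum_congr rfl fun p hp => mOf_sub hp
  · exact Finset.sum_congr rfl fun p hp => mOf_add hp

lemma Pq_RD_eq (β : Fin n → ℤ) :
    Pq n (RD n) β =
      ∑ᶠ ab ∈ Splus n β,
        (X : Polynomial ℤ) ^ ((∑ p ∈ pairsLt n, ab.1 p) + ∑ p ∈ pairsLt n, ab.2 p) := by
  rw [Pq]
  refine (finsum_mem_eq_of_bijOn (mOf n) ⟨?_, ?_, ?_⟩ ?_).symm
  · -- maps to
    rintro ab ⟨ha, hb, hsum⟩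
    refine ⟨fun α hα => mOf_not_mem hα, ?_⟩
    rw [sum_RD (fun α => mOf n ab α • α)]
    have e1 : ∑ p ∈ pairsLt n, mOf n ab (eps n p.1 - eps n p.2) • (eps n p.1 - eps n p.2)
        = ∑ p ∈ pairsLt n, ab.1 p • (eps n p.1 - eps n p.2) :=
      Finset.sum_congr rfl fun p hp => by rw [mOf_sub hp]
    have e2 : ∑ p ∈ pairsLt n, mOf n ab (eps n p.1 + eps n p.2) • (eps n p.1 + eps n p.2)
        = ∑ p ∈ pairsLt n, ab.2 p • (eps n p.1 + eps n p.2) :=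
      Finset.sum_congr rfl fun p hp => by rw [mOf_add hp]
    rw [e1, e2]
    exact hsum
  · -- inj on
    rintro ab ⟨ha, hb, _⟩ ab' ⟨ha', hb', _⟩ hm
    have key1 : ∀ p, ab.1 p = ab'.1 p := by
      intro p
      by_cases hp : p ∈ pairsLt n
      · rw [← mOf_sub (ab := ab) hp, ← mOf_sub (ab := ab') hp, hm]
      · rw [ha p hp, ha' p hp]
    have key2 : ∀ p, ab.2 p = ab'.2 p := by
      intro p
      by_cases hp : p ∈ pairsLt n
      · rw [← mOf_add (ab := ab) hp, ← mOf_add (ab := ab') hp, hm]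
      · rw [hb p hp, hb' p hp]
    exact Prod.ext (funext key1) (funext key2)
  · -- surj on
    rintro m ⟨hsupp, hsum⟩
    set a : Fin n × Fin n → ℕ :=
      fun p => if p ∈ pairsLt n then m (eps n p.1 - eps n p.2) else 0 with ha_def
    set b : Fin n × Fin n → ℕ :=
      fun p => if p ∈ pairsLt n then m (eps n p.1 + eps n p.2) else 0 with hb_def
    have hav : ∀ p ∈ pairsLt n, a p = m (eps n p.1 - eps n p.2) := fun p hp => if_pos hp
    have hbv : ∀ p ∈ pairsLt n, b p = m (eps n p.1 + eps n p.2) := fun p hp => if_pos hp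
    refine ⟨(a, b), ⟨fun p hp => if_neg hp, fun p hp => if_neg hp, ?_⟩, ?_⟩
    · rw [← hsum, sum_RD (fun α => m α • α)]
      congr 1
      · exact Finset.sum_congr rfl fun p hp => by dsimp only; rw [hav p hp]
      · exact Finset.sum_congr rfl fun p hp => by dsimp only; rw [hbv p hp]
    · funext α
      by_cases hα : α ∈ RD n
      · rw [RD, Finset.mem_union] at hα
        rcases hα with hα | hα
        · rw [RA, Finset.mem_image] at hα
          obtain ⟨p, hp, rfl⟩ := hα
          rw [mOf_sub hp]
          exact hav p hp
        · rw [Finset.mem_image] at hα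
          obtain ⟨p, hp, rfl⟩ := hα
          rw [mOf_add hp]
          exact hbv p hp
      · rw [mOf_not_mem hα, hsupp α hα]
  · -- function values agree
    rintro ab ⟨ha, hb, _⟩
    rw [mOf_exp]

def phi (n : ℕ) : Fin n × Fin n ≃ Fin n × Fin n :=
  (Equiv.prodComm _ _).trans (Fin.revPerm.prodCongr Fin.revPerm)

lemma phi_apply (p : Fin n × Fin n) : phi n p = (p.2.rev, p.1.rev) := rfl

lemma phi_phi (p : Fin n × Fin n) : phi n (phi n p) = p := by
  simp [phi_apply, Fin.rev_rev]

lemma phi_mem {p : Fin n × Fin n} : phi n p ∈ pairsLt n ↔ p ∈ pairsLt n := by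
  simp only [mem_pairsLt, phi_apply, Fin.rev_lt_rev]

lemma sum_phi {M : Type*} [AddCommMonoid M] (f : Fin n × Fin n → M) :
    ∑ p ∈ pairsLt n, f (phi n p) = ∑ p ∈ pairsLt n, f p :=
  Finset.sum_equiv (phi n) (fun p => phi_mem.symm) (fun p hp => rfl)

lemma sumA_transform (a : Fin n × Fin n → ℕ) (i : Fin n) :
    (∑ p ∈ pairsLt n, a (phi n p) • (eps n p.1 - eps n p.2)) i
      = -((∑ p ∈ pairsLt n, a p • (eps n p.1 - eps n p.2)) i.rev) := by
  rw [Finset.sum_apply, Finset.sum_apply, ← Finset.sum_neg_distrib]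
  refine Finset.sum_equiv (phi n) (fun p => phi_mem.symm) fun p hp => ?_
  simp only [phi_apply, Pi.smul_apply, Pi.sub_apply, eps_rev, Fin.rev_rev, smul_eq_mul,
    nsmul_eq_mul]
  ring

lemma sumB_transform (b : Fin n × Fin n → ℕ) (i : Fin n) :
    (∑ p ∈ pairsLt n, b (phi n p) • (eps n p.1 + eps n p.2)) i
      = (∑ p ∈ pairsLt n, b p • (eps n p.1 + eps n p.2)) i.rev := by
  rw [Finset.sum_apply, Finset.sum_apply]
  refine Finset.sum_equiv (phi n) (fun p => phi_mem.symm) fun p hp => ?_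
  simp only [phi_apply, Pi.smul_apply, Pi.add_apply, eps_rev, Fin.rev_rev, smul_eq_mul,
    nsmul_eq_mul]
  ring

lemma fq_eq (β : Fin n → ℤ) :
    fq n β =
      ∑ᶠ ab ∈ Splus n (fun i => -β i.rev),
        (X : Polynomial ℤ) ^ ((∑ p ∈ pairsLt n, ab.1 p) + ∑ p ∈ pairsLt n, ab.2 p) := by
  rw [fq]
  refine finsum_mem_eq_of_bijOn
    (fun ab => (fun p => ab.1 (phi n p), fun p => ab.2 (phi n p))) ⟨?_, ?_, ?_⟩ ?_
  · -- maps to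
    rintro ab ⟨ha, hb, hsum⟩
    refine ⟨fun p hp => ha (phi n p) fun h => hp (phi_mem.mp h),
      fun p hp => hb (phi n p) fun h => hp (phi_mem.mp h), ?_⟩
    funext i
    rw [Pi.add_apply, sumA_transform, sumB_transform]
    have h := congrFun hsum i.rev
    rw [Pi.sub_apply] at h
    linarith
  · -- inj on
    rintro ab _ ab' _ h
    have h1 := congrArg Prod.fst h
    have h2 := congrArg Prod.snd h
    refine Prod.ext (funext fun p => ?_) (funext fun p => ?_)
    · have := congrFun h1 (phi n p)
      simpa [phi_phi] using this
    · have := congrFun h2 (phi n p)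
      simpa [phi_phi] using this
  · -- surj on
    rintro ab' ⟨ha, hb, hsum⟩
    refine ⟨(fun p => ab'.1 (phi n p), fun p => ab'.2 (phi n p)),
      ⟨fun p hp => ha (phi n p) fun h => hp (phi_mem.mp h),
        fun p hp => hb (phi n p) fun h => hp (phi_mem.mp h), ?_⟩, ?_⟩
    · funext i
      rw [Pi.sub_apply, sumA_transform, sumB_transform]
      have h := congrFun hsum i.rev
      rw [Pi.add_apply] at h
      simp only [Fin.rev_rev] at h
      linarith
    · refine Prod.ext (funext fun p => ?_) (funext fun p => ?_)
      · show ab'.1 (phi n (phi n p)) = ab'.1 p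
        rw [phi_phi]
      · show ab'.2 (phi n (phi n p)) = ab'.2 p
        rw [phi_phi]
  · -- function values agree
    rintro ab _
    exact congrArg (fun t => (X : Polynomial ℤ) ^ t)
      (congrArg₂ HAdd.hAdd (sum_phi ab.1).symm (sum_phi ab.2).symm)

end AuxLemmas

/-- for partitions `λ, μ` of length `n`, with `m = max(λ_1, μ_1)`,
`λ̂ = (m-λ_n, ..., m-λ_1)` and `μ̂ = (m-μ_n, ..., m-μ_1)`, one has
`u_{λ,μ}(q) = K̃^{D_n}_{λ̂,μ̂}(q)`. -/
theorem u_eq_KtildeD_dual (n : ℕ) (hn : 0 < n) (lam mu : Fin n → ℤ)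
    (hlam : Antitone lam) (hlam0 : ∀ i, 0 ≤ lam i)
    (hmu : Antitone mu) (hmu0 : ∀ i, 0 ≤ mu i) :
    uP n lam mu =
      KT n (RD n)
        (fun i => max (lam ⟨0, hn⟩) (mu ⟨0, hn⟩) - lam i.rev)
        (fun i => max (lam ⟨0, hn⟩) (mu ⟨0, hn⟩) - mu i.rev) := by
  rw [uP, KT]
  have hww : (Fin.revPerm : Equiv.Perm (Fin n)) * Fin.revPerm = 1 := by
    ext i
    simp [Fin.rev_rev]
  have hsign : ∀ σ : Equiv.Perm (Fin n),
      Equiv.Perm.sign (Fin.revPerm * σ * Fin.revPerm) = Equiv.Perm.sign σ := by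
    intro σ
    have h1 : Equiv.Perm.sign (Fin.revPerm : Equiv.Perm (Fin n)) *
        Equiv.Perm.sign (Fin.revPerm : Equiv.Perm (Fin n)) = 1 := by
      rw [← map_mul, hww, map_one]
    rw [map_mul, map_mul,
      mul_comm (Equiv.Perm.sign (Fin.revPerm : Equiv.Perm (Fin n))) (Equiv.Perm.sign σ),
      mul_assoc, h1, mul_one]
  refine Fintype.sum_equiv
    ((Equiv.mulLeft (Fin.revPerm : Equiv.Perm (Fin n))).trans (Equiv.mulRight Fin.revPerm))
    _ _ fun σ => ?_
  have he : ((Equiv.mulLeft (Fin.revPerm : Equiv.Perm (Fin n))).trans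
      (Equiv.mulRight Fin.revPerm)) σ = Fin.revPerm * σ * Fin.revPerm := rfl
  rw [he, hsign σ]
  congr 1
  rw [fq_eq, Pq_RD_eq]
  refine congrArg (fun β : Fin n → ℤ => ∑ᶠ ab ∈ Splus n β,
    (X : Polynomial ℤ) ^ ((∑ p ∈ pairsLt n, ab.1 p) + ∑ p ∈ pairsLt n, ab.2 p)) ?_
  funext i
  simp only [Pi.add_apply, Equiv.Perm.mul_apply, Fin.revPerm_apply, Fin.rev_rev, rho]
  have h1 : ((σ i.rev).rev : ℕ) = n - 1 - ((σ i.rev : Fin n) : ℕ) := by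
    rw [Fin.val_rev]; omega
  have h2 : ((i.rev : Fin n) : ℕ) = n - 1 - ((i : Fin n) : ℕ) := by
    rw [Fin.val_rev]; omega
  have hk : ((σ i.rev : Fin n) : ℕ) < n := (σ i.rev).isLt
  have hi : ((i : Fin n) : ℕ) < n := i.isLt
  rw [h1, h2]
  have c1 : ((n - 1 - ((σ i.rev : Fin n) : ℕ) : ℕ) : ℤ)
      = (n : ℤ) - 1 - ((σ i.rev : Fin n) : ℕ) := by omega
  have c2 : ((n - 1 - ((i : Fin n) : ℕ) : ℕ) : ℤ) = (n : ℤ) - 1 - ((i : Fin n) : ℕ) := by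
    omega
  rw [c1, c2]
  ring
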